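/- arXiv:2406.17527 — 8 statements merged into one kernel-verified Lean document; each statement's English description precedes it below -/
import Mathlib

section
/- Let δ > 0 and define y_δ : (0, π) → ℝ by y_δ(x) = 2·arctan(δ·tan(x/2)). Then for every x ∈ (0, π): y_δ(x) ∈ (0, π), y_δ is differentiable at x, and (d/dx) y_δ(x) · sin x = sin(y_δ(x)). Consequently the gradient (sin x, sin y) of the function v(x,y) = −(cos x + cos y) at the point (x, y_δ(x)) is tangent to the curve Γ(δ) = {(x, y_δ(x)) : x ∈ (0,π)}, i.e., v has vanishing normal derivative along Γ(δ). -/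
theorem stmt_5 (δ : ℝ) (hδ : 0 < δ) (y : ℝ → ℝ)
    (hy : ∀ x, y x = 2 * Real.arctan (δ * Real.tan (x / 2))) :
    ∀ x ∈ Set.Ioo 0 Real.pi,
      y x ∈ Set.Ioo 0 Real.pi ∧ DifferentiableAt ℝ y x ∧
      deriv y x * Real.sin x = Real.sin (y x) ∧
      (Real.sin x, Real.sin (y x)) = Real.sin x • ((1 : ℝ), deriv y x) := by
  have hyf : y = fun x => 2 * Real.arctan (δ * Real.tan (x / 2)) := funext hy
  subst hyf
  rintro x ⟨hx0, hxπ⟩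
  have hπ := Real.pi_pos
  have hc : 0 < Real.cos (x / 2) :=
    Real.cos_pos_of_mem_Ioo ⟨by linarith, by linarith⟩
  have hs : 0 < Real.sin (x / 2) :=
    Real.sin_pos_of_pos_of_lt_pi (by linarith) (by linarith)
  set c := Real.cos (x / 2) with hcdef
  set s := Real.sin (x / 2) with hsdef
  have htan : Real.tan (x / 2) = s / c := Real.tan_eq_sin_div_cos _
  set u := δ * Real.tan (x / 2) with hu
  have hu0 : 0 < u := by rw [hu, htan]; positivity
  have h1u : (0 : ℝ) < 1 + u ^ 2 := by positivity
  -- derivative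
  have hd : HasDerivAt (fun x : ℝ => 2 * Real.arctan (δ * Real.tan (x / 2)))
      (δ / ((1 + u ^ 2) * c ^ 2)) x := by
    have h2 : HasDerivAt (fun x : ℝ => x / 2) (1 / 2) x := (hasDerivAt_id x).div_const 2
    have ht : HasDerivAt (fun x : ℝ => Real.tan (x / 2)) (1 / c ^ 2 * (1 / 2)) x :=
      by
        have := (Real.hasDerivAt_tan (x := x / 2) hc.ne').comp x h2
        exact this
    have ha : HasDerivAt (fun x : ℝ => Real.arctan (δ * Real.tan (x / 2)))
        (1 / (1 + u ^ 2) * (δ * (1 / c ^ 2 * (1 / 2)))) x :=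
      by
        have := (Real.hasDerivAt_arctan (δ * Real.tan (x / 2))).comp x (ht.const_mul δ)
        exact this
    have := ha.const_mul 2
    refine this.congr_deriv ?_
    field_simp
  have hderiv : deriv (fun x : ℝ => 2 * Real.arctan (δ * Real.tan (x / 2))) x
      = δ / ((1 + u ^ 2) * c ^ 2) := hd.deriv
  have harctan1 : 0 < Real.arctan u := by
    have := Real.arctan_strictMono hu0
    rwa [Real.arctan_zero] at this
  have harctan2 : Real.arctan u < Real.pi / 2 := Real.arctan_lt_pi_div_two u
  have hsinx : Real.sin x = 2 * s * c := by
    rw [hsdef, hcdef, ← Real.sin_two_mul]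
    ring_nf
  have hsqrt : Real.sqrt (1 + u ^ 2) * Real.sqrt (1 + u ^ 2) = 1 + u ^ 2 :=
    Real.mul_self_sqrt h1u.le
  have hsqrtpos : 0 < Real.sqrt (1 + u ^ 2) := Real.sqrt_pos.mpr h1u
  have hsiny : Real.sin (2 * Real.arctan u) = 2 * u / (1 + u ^ 2) := by
    rw [Real.sin_two_mul, Real.sin_arctan, Real.cos_arctan]
    rw [mul_assoc, div_mul_div_comm, hsqrt, mul_one]
    ring_nf
  have hkey : deriv (fun x : ℝ => 2 * Real.arctan (δ * Real.tan (x / 2))) x * Real.sin x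
      = Real.sin (2 * Real.arctan u) := by
    rw [hderiv, hsinx, hsiny, hu, htan]
    field_simp
  refine ⟨⟨by simpa using harctan1, by simp only []; linarith⟩, hd.differentiableAt, ?_, ?_⟩
  · simpa using hkey
  · have : Real.sin (2 * Real.arctan u)
        = Real.sin x * deriv (fun x : ℝ => 2 * Real.arctan (δ * Real.tan (x / 2))) x := by
      rw [← hkey]; ring
    simp only [Prod.smul_mk, smul_eq_mul, mul_one]
    refine Prod.ext rfl ?_
    simpa using this
end

section
/- Let x, y : ℝ → ℝ be differentiable functions satisfying x′(t) = −sin(x(t))·cos(2y(t)) and y′(t) = −2·cos(x(t))·sin(2y(t)) for all t ∈ ℝ (that is, (x, y) is an orbit of the gradient system X′ = ∇v for v(x,y) = cos x · cos 2y). Then for every t ∈ ℝ, sin(2·y(t)) · (sin(x(0)))⁴ = sin(2·y(0)) · (sin(x(t)))⁴. -/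
theorem stmt_6 (x y : ℝ → ℝ)
    (hx : ∀ t, HasDerivAt x (-(Real.sin (x t) * Real.cos (2 * y t))) t)
    (hy : ∀ t, HasDerivAt y (-(2 * Real.cos (x t) * Real.sin (2 * y t))) t) :
    ∀ t, Real.sin (2 * y t) * Real.sin (x 0) ^ 4 = Real.sin (2 * y 0) * Real.sin (x t) ^ 4 := by
  have hxd : Differentiable ℝ x := fun t => (hx t).differentiableAt
  have hyd : Differentiable ℝ y := fun t => (hy t).differentiableAt
  set g : ℝ → ℝ := fun t => -4 * Real.cos (x t) * Real.cos (2 * y t) with hg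
  have hgc : Continuous g := by
    apply Continuous.mul
    · exact continuous_const.mul (Real.continuous_cos.comp hxd.continuous)
    · exact Real.continuous_cos.comp (continuous_const.mul hyd.continuous)
  set G : ℝ → ℝ := fun t => ∫ s in (0:ℝ)..t, g s with hGdef
  have hG : ∀ t, HasDerivAt G (g t) t := fun t =>
    intervalIntegral.integral_hasDerivAt_right (hgc.intervalIntegrable _ _)
      (hgc.stronglyMeasurableAtFilter _ _) hgc.continuousAt
  -- f t = sin(2 y t) * sin(x 0)^4 - sin(2 y 0) * sin(x t)^4
  have hu : ∀ t, HasDerivAt (fun t => Real.sin (2 * y t))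
      (g t * Real.sin (2 * y t)) t := by
    intro t
    have h1 : HasDerivAt (fun t => 2 * y t)
        (2 * -(2 * Real.cos (x t) * Real.sin (2 * y t))) t := (hy t).const_mul 2
    have := (Real.hasDerivAt_sin (2 * y t)).comp t h1
    refine this.congr_deriv ?_
    simp [hg]; ring
  have hw : ∀ t, HasDerivAt (fun t => Real.sin (x t) ^ 4)
      (g t * Real.sin (x t) ^ 4) t := by
    intro t
    have h1 : HasDerivAt (fun t => Real.sin (x t))
        (Real.cos (x t) * -(Real.sin (x t) * Real.cos (2 * y t))) t :=
      (Real.hasDerivAt_sin (x t)).comp t (hx t)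
    have := h1.pow 4
    refine this.congr_deriv ?_
    simp [hg]; ring
  set f : ℝ → ℝ := fun t => Real.sin (2 * y t) * Real.sin (x 0) ^ 4
    - Real.sin (2 * y 0) * Real.sin (x t) ^ 4 with hfdef
  have hf : ∀ t, HasDerivAt f (g t * f t) t := by
    intro t
    have := ((hu t).mul_const (Real.sin (x 0) ^ 4)).sub ((hw t).const_mul (Real.sin (2 * y 0)))
    refine this.congr_deriv ?_
    simp only [hfdef]
    ring
  set F : ℝ → ℝ := fun t => f t * Real.exp (-(G t)) with hFdef
  have hF : ∀ t, HasDerivAt F 0 t := by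
    intro t
    have hE : HasDerivAt (fun t => Real.exp (-(G t))) (Real.exp (-(G t)) * -(g t)) t := by
      exact (Real.hasDerivAt_exp (-(G t))).comp t ((hG t).neg)
    have := (hf t).mul hE
    refine this.congr_deriv ?_
    ring
  have hconst : ∀ t, F t = F 0 := by
    intro t
    exact is_const_of_deriv_eq_zero (fun s => (hF s).differentiableAt)
      (fun s => (hF s).deriv) t 0
  intro t
  have h0 : f 0 = 0 := by simp [hfdef]
  have := hconst t
  have hf0 : f t * Real.exp (-(G t)) = 0 := by
    simpa [hFdef, h0] using this
  have : f t = 0 := by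
    rcases mul_eq_zero.mp hf0 with h | h
    · exact h
    · exact absurd h (Real.exp_ne_zero _)
  linarith [this, sub_eq_zero.mp this]
end

section
/- Let x, y : ℝ → ℝ be differentiable functions with x(t) ∈ (0, π) and y(t) ∈ (0, π) for all t, satisfying x′(t) = sin(x(t)) and y′(t) = sin(y(t)) for all t ∈ ℝ. Then for every t ∈ ℝ, tan(y(t)/2) · tan(x(0)/2) = tan(y(0)/2) · tan(x(t)/2). -/
open Real

lemma aux_deriv (f : ℝ → ℝ) (hr : ∀ t, f t ∈ Set.Ioo 0 Real.pi)
    (hf : ∀ t, HasDerivAt f (Real.sin (f t)) t) (t : ℝ) :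
    HasDerivAt (fun s => Real.log (Real.tan (f s / 2))) 1 t := by
  obtain ⟨h0, hpi⟩ := hr t
  have h1 : 0 < f t / 2 := by linarith
  have h2 : f t / 2 < π / 2 := by linarith
  have hcos : Real.cos (f t / 2) ≠ 0 := by
    apply ne_of_gt
    apply Real.cos_pos_of_mem_Ioo
    constructor <;> linarith [Real.pi_pos]
  have hsin : Real.sin (f t / 2) > 0 :=
    Real.sin_pos_of_pos_of_lt_pi h1 (by linarith [Real.pi_pos])
  have htan : Real.tan (f t / 2) > 0 := Real.tan_pos_of_pos_of_lt_pi_div_two h1 h2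
  have hd1 : HasDerivAt (fun s => f s / 2) (Real.sin (f t) / 2) t := (hf t).div_const 2
  have hd2 : HasDerivAt Real.tan (1 / Real.cos (f t / 2) ^ 2) (f t / 2) :=
    Real.hasDerivAt_tan hcos
  have hd3 := (Real.hasDerivAt_log htan.ne').comp t (hd2.comp t hd1)
  refine hd3.congr_deriv ?_
  symm
  rw [Real.tan_eq_sin_div_cos]
  have hsd : Real.sin (f t) = 2 * Real.sin (f t / 2) * Real.cos (f t / 2) := by
    rw [← Real.sin_two_mul]; ring_nf
  rw [hsd]
  field_simp

theorem stmt_7 (x y : ℝ → ℝ)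
    (hxr : ∀ t, x t ∈ Set.Ioo 0 Real.pi) (hyr : ∀ t, y t ∈ Set.Ioo 0 Real.pi)
    (hx : ∀ t, HasDerivAt x (Real.sin (x t)) t)
    (hy : ∀ t, HasDerivAt y (Real.sin (y t)) t) :
    ∀ t, Real.tan (y t / 2) * Real.tan (x 0 / 2) = Real.tan (y 0 / 2) * Real.tan (x t / 2) := by
  intro t
  have tanpos : ∀ (f : ℝ → ℝ), (∀ s, f s ∈ Set.Ioo 0 Real.pi) → ∀ s, 0 < Real.tan (f s / 2) := by
    intro f hr s
    obtain ⟨h0, hpi⟩ := hr s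
    exact Real.tan_pos_of_pos_of_lt_pi_div_two (by linarith) (by linarith)
  set g : ℝ → ℝ := fun s => Real.log (Real.tan (y s / 2)) - Real.log (Real.tan (x s / 2)) with hg
  have hgd : ∀ s, HasDerivAt g 0 s := by
    intro s
    have := (aux_deriv y hyr hy s).sub (aux_deriv x hxr hx s)
    rw [sub_self] at this
    exact this
  have hconst : g t = g 0 := by
    have hdiff : Differentiable ℝ g := fun s => (hgd s).differentiableAt
    have : ∀ s, deriv g s = 0 := fun s => (hgd s).deriv
    have := is_const_of_deriv_eq_zero hdiff this t 0
    exact this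
  have hyt := tanpos y hyr t
  have hy0 := tanpos y hyr 0
  have hxt := tanpos x hxr t
  have hx0 := tanpos x hxr 0
  have hlog : Real.log (Real.tan (y t / 2) * Real.tan (x 0 / 2)) =
      Real.log (Real.tan (y 0 / 2) * Real.tan (x t / 2)) := by
    rw [Real.log_mul hyt.ne' hx0.ne', Real.log_mul hy0.ne' hxt.ne']
    have := hconst
    simp only [hg] at this
    linarith
  have := Real.log_injOn_pos (Set.mem_Ioi.mpr (mul_pos hyt hx0))
    (Set.mem_Ioi.mpr (mul_pos hy0 hxt)) hlog
  exact this
end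

section
/- Let d ≥ 1, let Ω, Ω′ ⊆ ℝᵈ be open sets, let k ∈ ℝ, and let Ψ : Ω → Ω′ be a bijection such that Ψ is C² on Ω, its inverse Ψ⁻¹ is C² on Ω′, and det DΨ(x) ≠ 0 for every x ∈ Ω, where DΨ(x) is the Jacobian matrix of Ψ at x. For y ∈ Ω′ define the matrix A(y) = (1/|det DΨ(Ψ⁻¹(y))|) · DΨ(Ψ⁻¹(y)) · DΨ(Ψ⁻¹(y))ᵀ and the scalar q(y) = 1/|det DΨ(Ψ⁻¹(y))|. Let v : ℝᵈ → ℝ be a C² function with Δv + k²v = 0 on Ω, and define u : Ω′ → ℝ by u = v ∘ Ψ⁻¹. Then u satisfies the divergence-form equation ∑ᵢ ∂ᵢ ( ∑ⱼ A(y)ᵢⱼ · ∂ⱼu(y) ) + k² · q(y) · u(y) = 0 for every y ∈ Ω′. -/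
open Matrix
/-- The Laplacian of a scalar function on `EuclideanSpace ℝ (Fin d)`:
the sum of its second partial derivatives. -/
noncomputable def lapl {d : ℕ} (u : EuclideanSpace ℝ (Fin d) → ℝ)
    (x : EuclideanSpace ℝ (Fin d)) : ℝ :=
  ∑ i, fderiv ℝ (fun y => fderiv ℝ u y (EuclideanSpace.single i 1)) x (EuclideanSpace.single i 1)

/-- The Jacobian matrix of a map `Ψ : ℝᵈ → ℝᵈ` at a point `x`:
`(jacMat Ψ x) i j = ∂ⱼ Ψᵢ (x)`. -/
noncomputable def jacMat {d : ℕ}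
    (Ψ : EuclideanSpace ℝ (Fin d) → EuclideanSpace ℝ (Fin d))
    (x : EuclideanSpace ℝ (Fin d)) : Matrix (Fin d) (Fin d) ℝ :=
  Matrix.of fun i j => fderiv ℝ (fun z => Ψ z i) x (EuclideanSpace.single j 1)

open Equiv Filter Topology

section Aux

variable {d : ℕ}

local notation "E" => EuclideanSpace ℝ (Fin d)

/-- Partial derivative in the `i`-th coordinate direction. -/
noncomputable def pd (i : Fin d) (f : EuclideanSpace ℝ (Fin d) → ℝ)
    (y : EuclideanSpace ℝ (Fin d)) : ℝ :=
  fderiv ℝ f y (EuclideanSpace.single i 1)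

lemma expand_vec (z : E) : z = ∑ j, z j • EuclideanSpace.single j (1:ℝ) := by
  ext i
  have : (∑ j, z j • EuclideanSpace.single j (1:ℝ)) i
      = ∑ j, (z j • EuclideanSpace.single j (1:ℝ)) i :=
    by rw [WithLp.ofLp_sum]; exact Finset.sum_apply i Finset.univ _
  rw [this]
  simp [EuclideanSpace.single_apply]

lemma clm_expand (L : E →L[ℝ] ℝ) (z : E) :
    L z = ∑ j, z j * L (EuclideanSpace.single j 1) := by
  conv_lhs => rw [expand_vec z]
  simp [smul_eq_mul]

lemma fderiv_component (g : E → E) {y : E} (hg : DifferentiableAt ℝ g y) (a : Fin d) :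
    fderiv ℝ (fun z => g z a) y = (EuclideanSpace.proj a).comp (fderiv ℝ g y) := by
  have h := (((EuclideanSpace.proj (𝕜 := ℝ) a).hasFDerivAt (x := g y)).comp y
    hg.hasFDerivAt).fderiv
  exact h

/-- Chain rule for partial derivatives, coordinate form. -/
lemma pd_comp {f : E → ℝ} {g : E → E} {y : E}
    (hf : DifferentiableAt ℝ f (g y)) (hg : DifferentiableAt ℝ g y) (i : Fin d) :
    pd i (fun z => f (g z)) y = ∑ j, pd j f (g y) * pd i (fun z => g z j) y := by
  have hcomp : fderiv ℝ (fun z => f (g z)) y = (fderiv ℝ f (g y)).comp (fderiv ℝ g y) :=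
    fderiv_comp y hf hg
  have h2 : ∀ j, pd i (fun z => g z j) y = fderiv ℝ g y (EuclideanSpace.single i 1) j := by
    intro j
    rw [pd, fderiv_component g hg j]
    rfl
  rw [pd, hcomp]
  simp only [ContinuousLinearMap.comp_apply]
  rw [clm_expand]
  refine Finset.sum_congr rfl fun j _ => ?_
  rw [h2 j, pd]
  ring

lemma pd_sum {ι : Type*} (t : Finset ι) (F : ι → E → ℝ) {y : E}
    (h : ∀ r ∈ t, DifferentiableAt ℝ (F r) y) (i : Fin d) :
    pd i (fun z => ∑ r ∈ t, F r z) y = ∑ r ∈ t, pd i (F r) y := by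
  rw [pd, fderiv_fun_sum h]
  simp [pd, ContinuousLinearMap.sum_apply]

lemma pd_const_mul {f : E → ℝ} {y : E} (h : DifferentiableAt ℝ f y) (c : ℝ) (i : Fin d) :
    pd i (fun z => c * f z) y = c * pd i f y := by
  rw [pd, fderiv_const_mul h]
  simp [pd]

lemma pd_mul {f g : E → ℝ} {y : E} (hf : DifferentiableAt ℝ f y)
    (hg : DifferentiableAt ℝ g y) (i : Fin d) :
    pd i (fun z => f z * g z) y = f y * pd i g y + pd i f y * g y := by
  rw [pd, fderiv_fun_mul hf hg]
  simp [pd, smul_eq_mul]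
  ring

lemma pd_finset_prod {ι : Type*} [DecidableEq ι] (t : Finset ι) (g : ι → E → ℝ) {y : E}
    (h : ∀ r ∈ t, DifferentiableAt ℝ (g r) y) (i : Fin d) :
    pd i (fun z => ∏ r ∈ t, g r z) y
      = ∑ r ∈ t, (∏ s ∈ t.erase r, g s y) * pd i (g r) y := by
  have hh := HasFDerivAt.finset_prod (u := t) (g := g)
    (g' := fun r => fderiv ℝ (g r) y) (x := y) (fun r hr => (h r hr).hasFDerivAt)
  rw [pd, hh.fderiv]
  simp [pd, ContinuousLinearMap.sum_apply, smul_eq_mul]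

lemma contDiffAt_pd {f : E → ℝ} {y : E} (hf : ContDiffAt ℝ 2 f y) (j : Fin d) :
    ContDiffAt ℝ 1 (pd j f) y := by
  have h1 : ContDiffAt ℝ 1 (fderiv ℝ f) y := hf.fderiv_right (by norm_num)
  exact h1.clm_apply contDiffAt_const

/-- Symmetry of second partial derivatives for a `C²` function. -/
lemma pd_pd_symm {f : E → ℝ} {x : E} (hf : ContDiffAt ℝ 2 f x) (i j : Fin d) :
    pd i (pd j f) x = pd j (pd i f) x := by
  have hD : DifferentiableAt ℝ (fderiv ℝ f) x :=
    ((hf.fderiv_right (m := 1) (by norm_num)).differentiableAt one_ne_zero)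
  have key : ∀ a b : Fin d, pd a (pd b f) x =
      fderiv ℝ (fderiv ℝ f) x (EuclideanSpace.single a 1) (EuclideanSpace.single b 1) := by
    intro a b
    have h : fderiv ℝ (pd b f) x = (ContinuousLinearMap.apply ℝ ℝ
        (EuclideanSpace.single b (1:ℝ))).comp (fderiv ℝ (fderiv ℝ f) x) :=
      (((ContinuousLinearMap.apply ℝ ℝ
        (EuclideanSpace.single b (1:ℝ))).hasFDerivAt (x := fderiv ℝ f x)).comp x
        hD.hasFDerivAt).fderiv
    rw [pd, h]
    rfl
  rw [key i j, key j i]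
  have hev : ∀ᶠ y in nhds x, HasFDerivAt f (fderiv ℝ f y) y := by
    filter_upwards [hf.eventually (by norm_num)] with y hy
    exact (hy.differentiableAt (by norm_num)).hasFDerivAt
  exact second_derivative_symmetric_of_eventually hev hD.hasFDerivAt _ _

/-- The adjugate of a matrix, written as a sum over permutations. -/
lemma adj_eq (M : Matrix (Fin d) (Fin d) ℝ) (i a : Fin d) :
    adjugate M i a = ∑ σ : Perm (Fin d),
      (if σ a = i then ((Perm.sign σ : ℤ) : ℝ) * ∏ r ∈ Finset.univ.erase a, M r (σ r) else 0) := by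
  rw [adjugate_apply, ← det_transpose, det_apply']
  refine Finset.sum_congr rfl fun σ _ => ?_
  have hprod : ∏ r, (M.updateRow a (Pi.single i 1))ᵀ (σ r) r
      = (if σ a = i then (1:ℝ) else 0) * ∏ r ∈ Finset.univ.erase a, M r (σ r) := by
    rw [← Finset.mul_prod_erase Finset.univ _ (Finset.mem_univ a)]
    congr 1
    · simp [transpose_apply, updateRow_self, Pi.single_apply]
    · refine Finset.prod_congr rfl fun r hr => ?_
      have : r ≠ a := Finset.ne_of_mem_erase hr
      simp [transpose_apply, updateRow_ne, this]
  rw [hprod]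
  by_cases h : σ a = i <;> simp [h]

lemma contDiffAt_component {Φ : E → E} {y : E} (hΦ : ContDiffAt ℝ 2 Φ y) (r : Fin d) :
    ContDiffAt ℝ 2 (fun w => Φ w r) y :=
  ((EuclideanSpace.proj r : EuclideanSpace ℝ (Fin d) →L[ℝ] ℝ).contDiff.contDiffAt).comp y hΦ

lemma diffAt_jacEntry {Φ : E → E} {y : E} (hΦ : ContDiffAt ℝ 2 Φ y) (r s : Fin d) :
    DifferentiableAt ℝ (fun z => jacMat Φ z r s) y :=
  (contDiffAt_pd (contDiffAt_component hΦ r) s).differentiableAt one_ne_zero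

lemma diffAt_adjEntry {Φ : E → E} {y : E} (hΦ : ContDiffAt ℝ 2 Φ y) (i a : Fin d) :
    DifferentiableAt ℝ (fun z => adjugate (jacMat Φ z) i a) y := by
  classical
  have hfun : (fun z => adjugate (jacMat Φ z) i a) = fun z => ∑ σ : Perm (Fin d),
      (if σ a = i then ((Perm.sign σ : ℤ) : ℝ) * ∏ r ∈ Finset.univ.erase a, jacMat Φ z r (σ r)
        else 0) := funext fun z => adj_eq (jacMat Φ z) i a
  rw [hfun]
  refine DifferentiableAt.fun_sum fun σ _ => ?_
  by_cases h : σ a = i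
  · simp only [h, if_true]
    refine DifferentiableAt.const_mul ?_ _
    exact (HasFDerivAt.finset_prod
      (fun r _ => (diffAt_jacEntry hΦ r (σ r)).hasFDerivAt)).differentiableAt
  · simp only [h, if_false]
    exact differentiableAt_const 0

lemma diffAt_det {Φ : E → E} {y : E} (hΦ : ContDiffAt ℝ 2 Φ y) :
    DifferentiableAt ℝ (fun z => (jacMat Φ z).det) y := by
  classical
  have hfun : (fun z => (jacMat Φ z).det) = fun z => ∑ σ : Perm (Fin d),
      ((Perm.sign σ : ℤ) : ℝ) * ∏ r, jacMat Φ z (σ r) r := by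
    funext z
    rw [det_apply']
  rw [hfun]
  refine DifferentiableAt.fun_sum fun σ _ => ?_
  refine DifferentiableAt.const_mul ?_ _
  exact (HasFDerivAt.finset_prod
    (fun r _ => (diffAt_jacEntry hΦ (σ r) r).hasFDerivAt)).differentiableAt

/-- The Piola identity: the rows of the adjugate of the Jacobian of a `C²` map
are divergence free. -/
lemma piola {Φ : E → E} {y : E} (hΦ : ContDiffAt ℝ 2 Φ y) (a : Fin d) :
    ∑ i, pd i (fun z => adjugate (jacMat Φ z) i a) y = 0 := by
  classical
  set Bf : Fin d → Fin d → E → ℝ := fun r s z => pd s (fun w => Φ w r) z with hBf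
  have hBc : ∀ r s, ContDiffAt ℝ 1 (Bf r s) y := fun r s =>
    contDiffAt_pd (contDiffAt_component hΦ r) s
  have hBd : ∀ r s, DifferentiableAt ℝ (Bf r s) y := fun r s =>
    (hBc r s).differentiableAt one_ne_zero
  set P : Perm (Fin d) → E → ℝ := fun σ z => ∏ r ∈ Finset.univ.erase a, Bf r (σ r) z with hP
  have hPd : ∀ σ, DifferentiableAt ℝ (P σ) y := by
    intro σ
    exact (HasFDerivAt.finset_prod (fun r _ => (hBd r (σ r)).hasFDerivAt)).differentiableAt
  set c : Perm (Fin d) → ℝ := fun σ => ((Perm.sign σ : ℤ) : ℝ) with hc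
  have hfun : ∀ i : Fin d, (fun z => adjugate (jacMat Φ z) i a)
      = fun z => ∑ σ : Perm (Fin d), (if σ a = i then c σ * P σ z else 0) := by
    intro i
    funext z
    exact adj_eq (jacMat Φ z) i a
  have hstep1 : ∀ i : Fin d, pd i (fun z => adjugate (jacMat Φ z) i a) y
      = ∑ σ : Perm (Fin d), (if σ a = i then c σ * pd i (P σ) y else 0) := by
    intro i
    rw [hfun i, pd_sum]
    · refine Finset.sum_congr rfl fun σ _ => ?_
      by_cases h : σ a = i
      · simp only [h, if_true]
        exact pd_const_mul (hPd σ) (c σ) i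
      · simp only [h, if_false]
        simp [pd]
    · intro σ _
      by_cases h : σ a = i
      · simp only [h, if_true]
        exact (hPd σ).const_mul _
      · simp only [h, if_false]
        exact differentiableAt_const 0
  calc ∑ i, pd i (fun z => adjugate (jacMat Φ z) i a) y
      = ∑ i, ∑ σ : Perm (Fin d), (if σ a = i then c σ * pd i (P σ) y else 0) :=
        Finset.sum_congr rfl fun i _ => hstep1 i
    _ = ∑ σ : Perm (Fin d), ∑ i, (if σ a = i then c σ * pd i (P σ) y else 0) :=
        Finset.sum_comm
    _ = ∑ σ : Perm (Fin d), c σ * pd (σ a) (P σ) y := by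
        refine Finset.sum_congr rfl fun σ _ => ?_
        rw [Finset.sum_ite_eq]
        simp
    _ = ∑ σ : Perm (Fin d), ∑ cc ∈ Finset.univ.erase a,
          c σ * ((∏ s ∈ (Finset.univ.erase a).erase cc, Bf s (σ s) y)
            * pd (σ a) (Bf cc (σ cc)) y) := by
        refine Finset.sum_congr rfl fun σ _ => ?_
        rw [pd_finset_prod _ _ (fun r _ => hBd r (σ r)), Finset.mul_sum]
    _ = ∑ cc ∈ Finset.univ.erase a, ∑ σ : Perm (Fin d),
          c σ * ((∏ s ∈ (Finset.univ.erase a).erase cc, Bf s (σ s) y)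
            * pd (σ a) (Bf cc (σ cc)) y) :=
        Finset.sum_comm
    _ = 0 := by
        refine Finset.sum_eq_zero fun cc hcc => ?_
        have hca : cc ≠ a := Finset.ne_of_mem_erase hcc
        set f : Perm (Fin d) → ℝ := fun σ =>
          c σ * ((∏ s ∈ (Finset.univ.erase a).erase cc, Bf s (σ s) y)
            * pd (σ a) (Bf cc (σ cc)) y) with hf
        have hswap : ∀ σ : Perm (Fin d), f (σ * Equiv.swap a cc) = - f σ := by
          intro σ
          have hsign : c (σ * Equiv.swap a cc) = - c σ := by
            simp [hc, Perm.sign_mul, Perm.sign_swap (Ne.symm hca)]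
          have hprod : (∏ s ∈ (Finset.univ.erase a).erase cc, Bf s ((σ * Equiv.swap a cc) s) y)
              = ∏ s ∈ (Finset.univ.erase a).erase cc, Bf s (σ s) y := by
            refine Finset.prod_congr rfl fun s hs => ?_
            have hs2 : s ≠ cc := Finset.ne_of_mem_erase hs
            have hs1 : s ≠ a := Finset.ne_of_mem_erase (Finset.mem_of_mem_erase hs)
            rw [Perm.mul_apply, Equiv.swap_apply_of_ne_of_ne hs1 hs2]
          have ha : (σ * Equiv.swap a cc) a = σ cc := by
            simp [Perm.mul_apply]
          have hcc2 : (σ * Equiv.swap a cc) cc = σ a := by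
            simp [Perm.mul_apply]
          have hsym : pd (σ cc) (Bf cc (σ a)) y = pd (σ a) (Bf cc (σ cc)) y := by
            simp only [hBf]
            exact pd_pd_symm (contDiffAt_component hΦ cc) (σ cc) (σ a)
          rw [hf]
          simp only [hsign, hprod, ha, hcc2, hsym]
          ring
        have hbij : ∑ σ : Perm (Fin d), f σ = ∑ σ : Perm (Fin d), f (σ * Equiv.swap a cc) := by
          refine Fintype.sum_equiv (Equiv.mulRight (Equiv.swap a cc)) _ _ fun σ => ?_
          simp [mul_assoc]
        have h2 : ∑ σ : Perm (Fin d), f (σ * Equiv.swap a cc)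
            = - ∑ σ : Perm (Fin d), f σ := by
          simp [hswap]
        linarith [hbij, h2]

/-- Jacobian of a composition. -/
lemma jac_comp {f g : E → E} {y : E} (hf : DifferentiableAt ℝ f (g y))
    (hg : DifferentiableAt ℝ g y) :
    jacMat (fun z => f (g z)) y = jacMat f (g y) * jacMat g y := by
  ext i j
  rw [mul_apply]
  have hfc : DifferentiableAt ℝ (fun w => f w i) (g y) :=
    ((EuclideanSpace.proj i : EuclideanSpace ℝ (Fin d) →L[ℝ] ℝ).differentiableAt).comp _ hf
  exact pd_comp hfc hg j

lemma jac_eventually_id {h : E → E} {y : E} (hev : h =ᶠ[𝓝 y] id) :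
    jacMat h y = 1 := by
  ext i j
  have hcomp : (fun z => h z i) =ᶠ[𝓝 y] (fun z => z i) :=
    hev.mono fun z hz => by simp only [hz]; rfl
  have : fderiv ℝ (fun z => h z i) y = fderiv ℝ (fun z : E => z i) y := hcomp.fderiv_eq
  have hproj : fderiv ℝ (fun z : E => z i) y
      = (EuclideanSpace.proj i : EuclideanSpace ℝ (Fin d) →L[ℝ] ℝ) :=
    (EuclideanSpace.proj i : EuclideanSpace ℝ (Fin d) →L[ℝ] ℝ).hasFDerivAt.fderiv
  show fderiv ℝ (fun z => h z i) y (EuclideanSpace.single j 1) = (1 : Matrix (Fin d) (Fin d) ℝ) i j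
  rw [this, hproj]
  simp [EuclideanSpace.single_apply, one_apply, eq_comm]

end Aux

theorem stmt_8 {d : ℕ} (hd : 1 ≤ d) (Ω Ω' : Set (EuclideanSpace ℝ (Fin d)))
    (hΩ : IsOpen Ω) (hΩ' : IsOpen Ω') (k : ℝ)
    (Ψ Ψinv : EuclideanSpace ℝ (Fin d) → EuclideanSpace ℝ (Fin d))
    (hbij : Set.BijOn Ψ Ω Ω')
    (hinv1 : ∀ x ∈ Ω, Ψinv (Ψ x) = x) (hinv2 : ∀ y ∈ Ω', Ψ (Ψinv y) = y)
    (hΨ : ContDiffOn ℝ 2 Ψ Ω) (hΨinv : ContDiffOn ℝ 2 Ψinv Ω')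
    (hdet : ∀ x ∈ Ω, (jacMat Ψ x).det ≠ 0)
    (A : EuclideanSpace ℝ (Fin d) → Matrix (Fin d) (Fin d) ℝ)
    (hA : ∀ y ∈ Ω',
      A y = |(jacMat Ψ (Ψinv y)).det|⁻¹ • (jacMat Ψ (Ψinv y) * (jacMat Ψ (Ψinv y))ᵀ))
    (q : EuclideanSpace ℝ (Fin d) → ℝ)
    (hq : ∀ y ∈ Ω', q y = |(jacMat Ψ (Ψinv y)).det|⁻¹)
    (v : EuclideanSpace ℝ (Fin d) → ℝ) (hv : ContDiff ℝ 2 v)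
    (hveq : ∀ x ∈ Ω, lapl v x + k ^ 2 * v x = 0)
    (u : EuclideanSpace ℝ (Fin d) → ℝ) (hu : ∀ y, u y = v (Ψinv y)) :
    ∀ y ∈ Ω',
      (∑ i, fderiv ℝ
          (fun z => ∑ j, A z i j * fderiv ℝ u z (EuclideanSpace.single j 1))
          y (EuclideanSpace.single i 1)) + k ^ 2 * q y * u y = 0 := by
  classical
  intro y₀ hy₀
  show (∑ i, pd i (fun z => ∑ j, A z i j * pd j u z) y₀) + k ^ 2 * q y₀ * u y₀ = 0
  have hΨinvAt : ∀ y ∈ Ω', ContDiffAt ℝ 2 Ψinv y := fun y hy =>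
    hΨinv.contDiffAt (hΩ'.mem_nhds hy)
  have hmem : ∀ y ∈ Ω', Ψinv y ∈ Ω := by
    intro y hy
    obtain ⟨x, hx, hxy⟩ := hbij.surjOn hy
    rw [← hxy, hinv1 x hx]
    exact hx
  have hJB : ∀ y ∈ Ω', jacMat Ψ (Ψinv y) * jacMat Ψinv y = 1 := by
    intro y hy
    have hdΨ : DifferentiableAt ℝ Ψ (Ψinv y) :=
      ((hΨ.contDiffAt (hΩ.mem_nhds (hmem y hy))).differentiableAt (by norm_num))
    have hdI : DifferentiableAt ℝ Ψinv y := ((hΨinvAt y hy).differentiableAt (by norm_num))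
    rw [← jac_comp hdΨ hdI]
    exact jac_eventually_id (Filter.eventually_of_mem (hΩ'.mem_nhds hy) fun z hz => hinv2 z hz)
  have hBJ : ∀ y ∈ Ω', jacMat Ψinv y * jacMat Ψ (Ψinv y) = 1 := fun y hy =>
    mul_eq_one_comm.mp (hJB y hy)
  have hdet1 : ∀ y ∈ Ω', (jacMat Ψ (Ψinv y)).det * (jacMat Ψinv y).det = 1 := by
    intro y hy
    have h := congrArg Matrix.det (hJB y hy)
    rwa [det_mul, det_one] at h
  have hdetB : ∀ y ∈ Ω', (jacMat Ψinv y).det ≠ 0 := by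
    intro y hy h
    have h1 := hdet1 y hy
    rw [h, mul_zero] at h1
    exact zero_ne_one h1
  have hdetJ : ∀ y ∈ Ω', (jacMat Ψ (Ψinv y)).det = ((jacMat Ψinv y).det)⁻¹ := fun y hy =>
    eq_inv_of_mul_eq_one_left (hdet1 y hy)
  have habsJ : ∀ y ∈ Ω', |(jacMat Ψ (Ψinv y)).det|⁻¹ = |(jacMat Ψinv y).det| := fun y hy => by
    rw [hdetJ y hy, abs_inv, inv_inv]
  have hadjB : ∀ y ∈ Ω', adjugate (jacMat Ψinv y)
      = (jacMat Ψinv y).det • jacMat Ψ (Ψinv y) := by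
    intro y hy
    calc adjugate (jacMat Ψinv y)
        = (jacMat Ψ (Ψinv y) * jacMat Ψinv y) * adjugate (jacMat Ψinv y) := by
          rw [hJB y hy, one_mul]
      _ = jacMat Ψ (Ψinv y) * ((jacMat Ψinv y) * adjugate (jacMat Ψinv y)) := by
          rw [mul_assoc]
      _ = jacMat Ψ (Ψinv y) * ((jacMat Ψinv y).det • 1) := by rw [mul_adjugate]
      _ = (jacMat Ψinv y).det • jacMat Ψ (Ψinv y) := by rw [Matrix.mul_smul, mul_one]
  set x₀ := Ψinv y₀ with hx₀def
  have hx₀ : x₀ ∈ Ω := hmem y₀ hy₀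
  have hud : ∀ y ∈ Ω', ∀ j, pd j u y = ∑ a, pd a v (Ψinv y) * jacMat Ψinv y a j := by
    intro y hy j
    have hufun : u = fun z => v (Ψinv z) := funext hu
    rw [hufun]
    exact pd_comp (hv.contDiffAt.differentiableAt (by norm_num))
      ((hΨinvAt y hy).differentiableAt (by norm_num)) j
  set ε : ℝ := if 0 < (jacMat Ψinv y₀).det then 1 else -1 with hεdef
  have hcont : ContinuousAt (fun y => (jacMat Ψinv y).det) y₀ :=
    (diffAt_det (hΨinvAt y₀ hy₀)).continuousAt
  have habs : ∀ᶠ y in 𝓝 y₀, |(jacMat Ψinv y).det| = ε * (jacMat Ψinv y).det := by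
    by_cases h0 : 0 < (jacMat Ψinv y₀).det
    · filter_upwards [hcont.eventually (eventually_gt_nhds h0)] with y hy
      rw [abs_of_pos hy, hεdef]
      simp [h0]
    · have hneg : (jacMat Ψinv y₀).det < 0 :=
        lt_of_le_of_ne (not_lt.mp h0) (hdetB y₀ hy₀)
      filter_upwards [hcont.eventually (eventually_lt_nhds hneg)] with y hy
      rw [abs_of_neg hy, hεdef]
      simp [h0]
  set w : Fin d → EuclideanSpace ℝ (Fin d) → ℝ := fun a y => pd a v (Ψinv y) with hwdef
  have hwD : ∀ a, DifferentiableAt ℝ (w a) y₀ := fun a =>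
    (((contDiffAt_pd hv.contDiffAt a).comp y₀
      ((hΨinvAt y₀ hy₀).of_le (by norm_num))).differentiableAt one_ne_zero)
  set adjF : Fin d → Fin d → EuclideanSpace ℝ (Fin d) → ℝ :=
    fun i a y => adjugate (jacMat Ψinv y) i a with hadjFdef
  have hadjD : ∀ i a, DifferentiableAt ℝ (adjF i a) y₀ := fun i a =>
    diffAt_adjEntry (hΨinvAt y₀ hy₀) i a
  have hFG : ∀ i, (fun z => ∑ j, A z i j * pd j u z)
      =ᶠ[𝓝 y₀] (fun z => ε * ∑ a, adjF i a z * w a z) := by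
    intro i
    filter_upwards [hΩ'.mem_nhds hy₀, habs] with y hy hab
    have hAy := hA y hy
    calc ∑ j, A y i j * pd j u y
        = ∑ j, ∑ a, (|(jacMat Ψ (Ψinv y)).det|⁻¹
            * ((jacMat Ψ (Ψinv y) * (jacMat Ψ (Ψinv y))ᵀ) i j))
            * (pd a v (Ψinv y) * jacMat Ψinv y a j) := by
          refine Finset.sum_congr rfl fun j _ => ?_
          rw [hAy, hud y hy j, Finset.mul_sum]
          refine Finset.sum_congr rfl fun a _ => ?_
          simp [Matrix.smul_apply, smul_eq_mul]
      _ = ∑ a, (|(jacMat Ψ (Ψinv y)).det|⁻¹ * pd a v (Ψinv y))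
            * ∑ j, ((jacMat Ψ (Ψinv y) * (jacMat Ψ (Ψinv y))ᵀ) i j * jacMat Ψinv y a j) := by
          rw [Finset.sum_comm]
          refine Finset.sum_congr rfl fun a _ => ?_
          rw [Finset.mul_sum]
          refine Finset.sum_congr rfl fun j _ => ?_
          ring
      _ = ∑ a, (|(jacMat Ψ (Ψinv y)).det|⁻¹ * pd a v (Ψinv y)) * (jacMat Ψ (Ψinv y)) i a := by
          refine Finset.sum_congr rfl fun a _ => ?_
          congr 1
          have hmm : ∑ j, ((jacMat Ψ (Ψinv y) * (jacMat Ψ (Ψinv y))ᵀ) i j * jacMat Ψinv y a j)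
              = (jacMat Ψ (Ψinv y) * (jacMat Ψ (Ψinv y))ᵀ * (jacMat Ψinv y)ᵀ) i a := by
            rw [Matrix.mul_apply]
            exact Finset.sum_congr rfl fun j _ => by rw [transpose_apply]
          rw [hmm, mul_assoc, ← transpose_mul, hBJ y hy, transpose_one, mul_one]
      _ = ε * ∑ a, adjF i a y * w a y := by
          rw [Finset.mul_sum]
          refine Finset.sum_congr rfl fun a _ => ?_
          have hentry : adjF i a y = (jacMat Ψinv y).det * (jacMat Ψ (Ψinv y)) i a := by
            simp only [hadjFdef]
            rw [hadjB y hy]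
            simp [Matrix.smul_apply, smul_eq_mul]
          rw [hentry, habsJ y hy, hab]
          simp only [hwdef]
          ring
  have hpdF : ∀ i, pd i (fun z => ∑ j, A z i j * pd j u z) y₀
      = pd i (fun z => ε * ∑ a, adjF i a z * w a z) y₀ := by
    intro i
    rw [pd, pd, (hFG i).fderiv_eq]
  have hG : ∀ i, pd i (fun z => ε * ∑ a, adjF i a z * w a z) y₀
      = ε * ∑ a, (adjF i a y₀ * pd i (w a) y₀ + pd i (adjF i a) y₀ * w a y₀) := by
    intro i
    rw [pd_const_mul (DifferentiableAt.fun_sum fun a _ => (hadjD i a).fun_mul (hwD a)) ε i,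
      pd_sum _ _ (fun a _ => (hadjD i a).fun_mul (hwD a)) i]
    congr 1
    exact Finset.sum_congr rfl fun a _ => pd_mul (hadjD i a) (hwD a) i
  have hPio : ∀ a, ∑ i, pd i (adjF i a) y₀ = 0 := fun a => piola (hΨinvAt y₀ hy₀) a
  have hw2 : ∀ a i, pd i (w a) y₀ = ∑ b, pd b (pd a v) x₀ * jacMat Ψinv y₀ b i := by
    intro a i
    simp only [hwdef]
    exact pd_comp ((contDiffAt_pd hv.contDiffAt a).differentiableAt one_ne_zero)
      ((hΨinvAt y₀ hy₀).differentiableAt (by norm_num)) i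
  have s2 : ∑ i, ∑ a, pd i (adjF i a) y₀ * w a y₀ = 0 := by
    rw [Finset.sum_comm]
    refine Finset.sum_eq_zero fun a _ => ?_
    rw [← Finset.sum_mul, hPio a, zero_mul]
  have s3 : ∑ i, ∑ a, adjF i a y₀ * pd i (w a) y₀ = (jacMat Ψinv y₀).det * lapl v x₀ := by
    have e1 : ∀ a, ∑ i, adjF i a y₀ * pd i (w a) y₀
        = ∑ b, pd b (pd a v) x₀ * ∑ i, (jacMat Ψinv y₀ b i * adjF i a y₀) := by
      intro a
      calc ∑ i, adjF i a y₀ * pd i (w a) y₀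
          = ∑ i, ∑ b, pd b (pd a v) x₀ * (jacMat Ψinv y₀ b i * adjF i a y₀) := by
            refine Finset.sum_congr rfl fun i _ => ?_
            rw [hw2 a i, Finset.mul_sum]
            refine Finset.sum_congr rfl fun b _ => ?_
            ring
        _ = ∑ b, ∑ i, pd b (pd a v) x₀ * (jacMat Ψinv y₀ b i * adjF i a y₀) :=
            Finset.sum_comm
        _ = ∑ b, pd b (pd a v) x₀ * ∑ i, (jacMat Ψinv y₀ b i * adjF i a y₀) := by
            refine Finset.sum_congr rfl fun b _ => ?_
            rw [Finset.mul_sum]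
    have e2 : ∀ a b, ∑ i, (jacMat Ψinv y₀ b i * adjF i a y₀)
        = (jacMat Ψinv y₀).det * (1 : Matrix (Fin d) (Fin d) ℝ) b a := by
      intro a b
      have : ∑ i, (jacMat Ψinv y₀ b i * adjF i a y₀)
          = ((jacMat Ψinv y₀) * adjugate (jacMat Ψinv y₀)) b a := by
        rw [Matrix.mul_apply]
      rw [this, mul_adjugate, Matrix.smul_apply, smul_eq_mul]
    calc ∑ i, ∑ a, adjF i a y₀ * pd i (w a) y₀
        = ∑ a, ∑ i, adjF i a y₀ * pd i (w a) y₀ := Finset.sum_comm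
      _ = ∑ a, ∑ b, pd b (pd a v) x₀
            * ((jacMat Ψinv y₀).det * (1 : Matrix (Fin d) (Fin d) ℝ) b a) := by
          refine Finset.sum_congr rfl fun a _ => ?_
          rw [e1 a]
          exact Finset.sum_congr rfl fun b _ => by rw [e2 a b]
      _ = ∑ a, pd a (pd a v) x₀ * (jacMat Ψinv y₀).det := by
          refine Finset.sum_congr rfl fun a _ => ?_
          rw [Finset.sum_eq_single a]
          · rw [Matrix.one_apply_eq, mul_one]
          · intro b _ hb
            rw [Matrix.one_apply_ne hb, mul_zero, mul_zero]
          · intro h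
            exact absurd (Finset.mem_univ a) h
      _ = (jacMat Ψinv y₀).det * lapl v x₀ := by
          rw [← Finset.sum_mul, mul_comm]
          rfl
  have hmain : ∑ i, pd i (fun z => ∑ j, A z i j * pd j u z) y₀
      = ε * ((jacMat Ψinv y₀).det * lapl v x₀) := by
    calc ∑ i, pd i (fun z => ∑ j, A z i j * pd j u z) y₀
        = ∑ i, (ε * ∑ a, (adjF i a y₀ * pd i (w a) y₀ + pd i (adjF i a) y₀ * w a y₀)) :=
          Finset.sum_congr rfl fun i _ => by rw [hpdF i, hG i]
      _ = ε * ∑ i, ∑ a, (adjF i a y₀ * pd i (w a) y₀ + pd i (adjF i a) y₀ * w a y₀) := by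
          rw [Finset.mul_sum]
      _ = ε * (∑ i, ∑ a, adjF i a y₀ * pd i (w a) y₀
            + ∑ i, ∑ a, pd i (adjF i a) y₀ * w a y₀) := by
          congr 1
          rw [← Finset.sum_add_distrib]
          exact Finset.sum_congr rfl fun i _ => by rw [← Finset.sum_add_distrib]
      _ = ε * ((jacMat Ψinv y₀).det * lapl v x₀) := by rw [s2, s3, add_zero]
  have hε0 : ε * (jacMat Ψinv y₀).det = |(jacMat Ψinv y₀).det| := (habs.self_of_nhds).symm
  have hlap : lapl v x₀ = -(k ^ 2 * v x₀) := by linarith [hveq x₀ hx₀]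
  rw [hmain, hq y₀ hy₀, habsJ y₀ hy₀, ← hε0, hu y₀, ← hx₀def, hlap]
  ring
end

section
/- Let a₁, a₂, q₀ be positive reals and let m, n be natural numbers, not both zero, such that m²·(q₀ − a₁) = n²·(a₂ − q₀). Let κ be a positive natural number, set k² = κ²(m² + n²), and define u : ℝ² → ℝ by u(x, y) = cos(κ m x)·cos(κ n y). Then: (i) a₁·∂²u/∂x² + a₂·∂²u/∂y² + k²·q₀·u = 0 at every point of ℝ²; (ii) ∂²u/∂x² + ∂²u/∂y² + k²·u = 0 at every point of ℝ²; (iii) ∂u/∂x(x,y) = 0 whenever x ∈ {0, π}, and ∂u/∂y(x,y) = 0 whenever y ∈ {0, π}. -/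
/-- Partial derivative in the first coordinate direction on `ℝ²`. -/
noncomputable def dX (u : ℝ × ℝ → ℝ) (p : ℝ × ℝ) : ℝ := fderiv ℝ u p (1, 0)

/-- Partial derivative in the second coordinate direction on `ℝ²`. -/
noncomputable def dY (u : ℝ × ℝ → ℝ) (p : ℝ × ℝ) : ℝ := fderiv ℝ u p (0, 1)

lemma keyFD {f g : ℝ → ℝ} {f' g' : ℝ} (p : ℝ × ℝ)
    (hf : HasDerivAt f f' p.1) (hg : HasDerivAt g g' p.2) :
    HasFDerivAt (fun q : ℝ × ℝ => f q.1 * g q.2)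
      (f p.1 • ((ContinuousLinearMap.smulRight (1 : ℝ →L[ℝ] ℝ) g').comp
          (ContinuousLinearMap.snd ℝ ℝ ℝ)) +
       g p.2 • ((ContinuousLinearMap.smulRight (1 : ℝ →L[ℝ] ℝ) f').comp
          (ContinuousLinearMap.fst ℝ ℝ ℝ))) p := by
  have h1 : HasFDerivAt (fun q : ℝ × ℝ => f q.1)
      ((ContinuousLinearMap.smulRight (1 : ℝ →L[ℝ] ℝ) f').comp
        (ContinuousLinearMap.fst ℝ ℝ ℝ)) p :=
    hf.hasFDerivAt.comp p (hasFDerivAt_fst)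
  have h2 : HasFDerivAt (fun q : ℝ × ℝ => g q.2)
      ((ContinuousLinearMap.smulRight (1 : ℝ →L[ℝ] ℝ) g').comp
        (ContinuousLinearMap.snd ℝ ℝ ℝ)) p :=
    hg.hasFDerivAt.comp p (hasFDerivAt_snd)
  exact h1.mul h2

lemma keyX {f g : ℝ → ℝ} {f' g' : ℝ} (p : ℝ × ℝ)
    (hf : HasDerivAt f f' p.1) (hg : HasDerivAt g g' p.2) :
    dX (fun q : ℝ × ℝ => f q.1 * g q.2) p = f' * g p.2 := by
  rw [dX, (keyFD p hf hg).fderiv]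
  simp [mul_comm]

lemma keyY {f g : ℝ → ℝ} {f' g' : ℝ} (p : ℝ × ℝ)
    (hf : HasDerivAt f f' p.1) (hg : HasDerivAt g g' p.2) :
    dY (fun q : ℝ × ℝ => f q.1 * g q.2) p = f p.1 * g' := by
  rw [dY, (keyFD p hf hg).fderiv]
  simp [mul_comm]

lemma hcos (a x : ℝ) : HasDerivAt (fun t => Real.cos (a * t)) (-(a * Real.sin (a * x))) x := by
  simpa [mul_comm] using ((hasDerivAt_id x).const_mul a).cos

lemma hsin (a x : ℝ) :
    HasDerivAt (fun t => -(a * Real.sin (a * t))) (-(a ^ 2 * Real.cos (a * x))) x := by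
  have h := (((hasDerivAt_id x).const_mul a).sin.const_mul a).neg
  simp only [id_eq, Pi.neg_def] at h
  exact h.congr_deriv (by ring)

theorem stmt_12 (a₁ a₂ q₀ : ℝ) (ha₁ : 0 < a₁) (ha₂ : 0 < a₂) (hq₀ : 0 < q₀)
    (m n : ℕ) (hmn : ¬(m = 0 ∧ n = 0))
    (hrel : (m : ℝ) ^ 2 * (q₀ - a₁) = (n : ℝ) ^ 2 * (a₂ - q₀))
    (κ : ℕ) (hκ : 0 < κ) (k2 : ℝ)
    (hk2 : k2 = (κ : ℝ) ^ 2 * ((m : ℝ) ^ 2 + (n : ℝ) ^ 2))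
    (u : ℝ × ℝ → ℝ)
    (hu : ∀ p : ℝ × ℝ,
      u p = Real.cos ((κ : ℝ) * (m : ℝ) * p.1) * Real.cos ((κ : ℝ) * (n : ℝ) * p.2)) :
    (∀ p : ℝ × ℝ, a₁ * dX (dX u) p + a₂ * dY (dY u) p + k2 * q₀ * u p = 0) ∧
    (∀ p : ℝ × ℝ, dX (dX u) p + dY (dY u) p + k2 * u p = 0) ∧
    (∀ p : ℝ × ℝ, (p.1 = 0 ∨ p.1 = Real.pi) → dX u p = 0) ∧
    (∀ p : ℝ × ℝ, (p.2 = 0 ∨ p.2 = Real.pi) → dY u p = 0) := by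
  set α : ℝ := (κ : ℝ) * (m : ℝ) with hα
  set β : ℝ := (κ : ℝ) * (n : ℝ) with hβ
  have hu' : u = fun q : ℝ × ℝ => Real.cos (α * q.1) * Real.cos (β * q.2) := funext hu
  subst hu'
  -- first partials
  have hdX : ∀ p : ℝ × ℝ,
      dX (fun q : ℝ × ℝ => Real.cos (α * q.1) * Real.cos (β * q.2)) p
        = -(α * Real.sin (α * p.1)) * Real.cos (β * p.2) := fun p =>
    keyX p (hcos α p.1) (hcos β p.2)
  have hdY : ∀ p : ℝ × ℝ,
      dY (fun q : ℝ × ℝ => Real.cos (α * q.1) * Real.cos (β * q.2)) p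
        = Real.cos (α * p.1) * -(β * Real.sin (β * p.2)) := fun p =>
    keyY p (hcos α p.1) (hcos β p.2)
  have hdXf : dX (fun q : ℝ × ℝ => Real.cos (α * q.1) * Real.cos (β * q.2))
      = fun q : ℝ × ℝ => -(α * Real.sin (α * q.1)) * Real.cos (β * q.2) := funext hdX
  have hdYf : dY (fun q : ℝ × ℝ => Real.cos (α * q.1) * Real.cos (β * q.2))
      = fun q : ℝ × ℝ => Real.cos (α * q.1) * -(β * Real.sin (β * q.2)) := funext hdY
  have hdXX : ∀ p : ℝ × ℝ,
      dX (dX (fun q : ℝ × ℝ => Real.cos (α * q.1) * Real.cos (β * q.2))) p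
        = -(α ^ 2 * Real.cos (α * p.1)) * Real.cos (β * p.2) := by
    intro p
    rw [hdXf]
    exact keyX p (hsin α p.1) (hcos β p.2)
  have hdYY : ∀ p : ℝ × ℝ,
      dY (dY (fun q : ℝ × ℝ => Real.cos (α * q.1) * Real.cos (β * q.2))) p
        = Real.cos (α * p.1) * -(β ^ 2 * Real.cos (β * p.2)) := by
    intro p
    rw [hdYf]
    exact keyY p (hcos α p.1) (hsin β p.2)
  refine ⟨fun p => ?_, fun p => ?_, fun p hp => ?_, fun p hp => ?_⟩
  · rw [hdXX, hdYY, hk2, hα, hβ]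
    linear_combination
      ((κ : ℝ) ^ 2 * (Real.cos ((κ : ℝ) * (m : ℝ) * p.1) * Real.cos ((κ : ℝ) * (n : ℝ) * p.2))) * hrel
  · rw [hdXX, hdYY, hk2, hα, hβ]
    ring
  · rw [hdX]
    rcases hp with h | h
    · simp [h]
    · rw [h, hα]
      have : Real.sin ((κ : ℝ) * (m : ℝ) * Real.pi) = 0 := by
        have := Real.sin_nat_mul_pi (κ * m)
        push_cast at this
        simpa using this
      simp [this]
  · rw [hdY]
    rcases hp with h | h
    · simp [h]
    · rw [h, hβ]
      have : Real.sin ((κ : ℝ) * (n : ℝ) * Real.pi) = 0 := by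
        have := Real.sin_nat_mul_pi (κ * n)
        push_cast at this
        simpa using this
      simp [this]
end

section
/- Let a₂, q₀ be positive reals with (q₀ − 1)(a₂ − 1) > 0, let m be a positive natural number, set k = m·√((a₂ − 1)/(q₀ − 1)), and let b ∈ ℂ satisfy b² = k² − m². For any constants c₁, c₂ ∈ ℂ define u : ℝ² → ℂ by u(x, y) = (c₁·cos(b·x) + c₂·sin(b·x))·cos(m·y), using the complex cosine and sine. Then: (i) ∂²u/∂x² + a₂·∂²u/∂y² + k²·q₀·u = 0 at every point of ℝ²; (ii) ∂²u/∂x² + ∂²u/∂y² + k²·u = 0 at every point of ℝ²; (iii) ∂u/∂y(x, y) = 0 whenever y ∈ {0, π}. -/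
/-- Partial derivative in the first coordinate direction on `ℝ²`, for a
complex-valued function. -/
noncomputable def dXc (u : ℝ × ℝ → ℂ) (p : ℝ × ℝ) : ℂ := fderiv ℝ u p (1, 0)

/-- Partial derivative in the second coordinate direction on `ℝ²`, for a
complex-valued function. -/
noncomputable def dYc (u : ℝ × ℝ → ℂ) (p : ℝ × ℝ) : ℂ := fderiv ℝ u p (0, 1)

lemma prodD (F G F' G' : ℂ → ℂ)
    (hF : ∀ z, HasDerivAt F (F' z) z) (hG : ∀ z, HasDerivAt G (G' z) z) :
    (∀ p : ℝ × ℝ, dXc (fun q => F ↑q.1 * G ↑q.2) p = F' ↑p.1 * G ↑p.2) ∧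
    (∀ p : ℝ × ℝ, dYc (fun q => F ↑q.1 * G ↑q.2) p = F ↑p.1 * G' ↑p.2) := by
  have key : ∀ p : ℝ × ℝ, HasFDerivAt (fun q : ℝ × ℝ => F ↑q.1 * G ↑q.2)
      (F ↑p.1 • (G' ↑p.2 • (Complex.ofRealCLM.comp (ContinuousLinearMap.snd ℝ ℝ ℝ))) +
       G ↑p.2 • (F' ↑p.1 • (Complex.ofRealCLM.comp (ContinuousLinearMap.fst ℝ ℝ ℝ)))) p := by
    intro p
    have hx : HasFDerivAt (fun q : ℝ × ℝ => ((q.1 : ℂ)))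
        (Complex.ofRealCLM.comp (ContinuousLinearMap.fst ℝ ℝ ℝ)) p :=
      (Complex.ofRealCLM.comp (ContinuousLinearMap.fst ℝ ℝ ℝ)).hasFDerivAt
    have hy : HasFDerivAt (fun q : ℝ × ℝ => ((q.2 : ℂ)))
        (Complex.ofRealCLM.comp (ContinuousLinearMap.snd ℝ ℝ ℝ)) p :=
      (Complex.ofRealCLM.comp (ContinuousLinearMap.snd ℝ ℝ ℝ)).hasFDerivAt
    exact (((hF ↑p.1).comp_hasFDerivAt p hx)).mul (((hG ↑p.2).comp_hasFDerivAt p hy))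
  constructor <;> intro p <;>
    [rw [dXc, (key p).fderiv]; rw [dYc, (key p).fderiv]] <;>
    simp [ContinuousLinearMap.comp_apply, mul_comm]

theorem stmt_13 (a₂ q₀ : ℝ) (ha₂ : 0 < a₂) (hq₀ : 0 < q₀)
    (hsign : (q₀ - 1) * (a₂ - 1) > 0)
    (m : ℕ) (hm : 0 < m) (k : ℝ)
    (hk : k = (m : ℝ) * Real.sqrt ((a₂ - 1) / (q₀ - 1)))
    (b : ℂ) (hb : b ^ 2 = (k : ℂ) ^ 2 - (m : ℂ) ^ 2)
    (c₁ c₂ : ℂ) (u : ℝ × ℝ → ℂ)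
    (hu : ∀ p : ℝ × ℝ,
      u p = (c₁ * Complex.cos (b * (p.1 : ℂ)) + c₂ * Complex.sin (b * (p.1 : ℂ))) *
        Complex.cos ((m : ℂ) * (p.2 : ℂ))) :
    (∀ p : ℝ × ℝ,
      dXc (dXc u) p + (a₂ : ℂ) * dYc (dYc u) p + ((k : ℂ) ^ 2 * (q₀ : ℂ)) * u p = 0) ∧
    (∀ p : ℝ × ℝ, dXc (dXc u) p + dYc (dYc u) p + (k : ℂ) ^ 2 * u p = 0) ∧
    (∀ p : ℝ × ℝ, (p.2 = 0 ∨ p.2 = Real.pi) → dYc u p = 0) := by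
  set F₀ : ℂ → ℂ := fun z => c₁ * Complex.cos (b * z) + c₂ * Complex.sin (b * z) with hF₀
  set F₁ : ℂ → ℂ := fun z => (-(c₁ * Complex.sin (b * z)) + c₂ * Complex.cos (b * z)) * b
    with hF₁
  set F₂ : ℂ → ℂ := fun z => -(b ^ 2) * F₀ z with hF₂
  set G₀ : ℂ → ℂ := fun z => Complex.cos ((m : ℂ) * z) with hG₀
  set G₁ : ℂ → ℂ := fun z => -(Complex.sin ((m : ℂ) * z)) * (m : ℂ) with hG₁
  set G₂ : ℂ → ℂ := fun z => -((m : ℂ) ^ 2) * G₀ z with hG₂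
  have hlin : ∀ (c z : ℂ), HasDerivAt (fun w => c * w) c z := fun c z => by
    simpa using (hasDerivAt_id z).const_mul c
  have hF01 : ∀ z, HasDerivAt F₀ (F₁ z) z := by
    intro z
    have h1 : HasDerivAt (fun w => Complex.cos (b * w)) (-Complex.sin (b * z) * b) z :=
      (Complex.hasDerivAt_cos (b * z)).comp z (hlin b z)
    have h2 : HasDerivAt (fun w => Complex.sin (b * w)) (Complex.cos (b * z) * b) z :=
      (Complex.hasDerivAt_sin (b * z)).comp z (hlin b z)
    have := (h1.const_mul c₁).add (h2.const_mul c₂)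
    refine this.congr_deriv ?_
    simp [hF₁]; ring
  have hF12 : ∀ z, HasDerivAt F₁ (F₂ z) z := by
    intro z
    have h1 : HasDerivAt (fun w => Complex.cos (b * w)) (-Complex.sin (b * z) * b) z :=
      (Complex.hasDerivAt_cos (b * z)).comp z (hlin b z)
    have h2 : HasDerivAt (fun w => Complex.sin (b * w)) (Complex.cos (b * z) * b) z :=
      (Complex.hasDerivAt_sin (b * z)).comp z (hlin b z)
    have := (((h2.const_mul c₁).neg).add (h1.const_mul c₂)).mul_const b
    refine this.congr_deriv ?_
    simp [hF₂, hF₀]; ring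
  have hG01 : ∀ z, HasDerivAt G₀ (G₁ z) z := fun z =>
    (Complex.hasDerivAt_cos ((m : ℂ) * z)).comp z (hlin (m : ℂ) z)
  have hG12 : ∀ z, HasDerivAt G₁ (G₂ z) z := by
    intro z
    have h2 : HasDerivAt (fun w => Complex.sin ((m : ℂ) * w))
        (Complex.cos ((m : ℂ) * z) * (m : ℂ)) z :=
      (Complex.hasDerivAt_sin ((m : ℂ) * z)).comp z (hlin (m : ℂ) z)
    have := (h2.neg).mul_const (m : ℂ)
    refine this.congr_deriv ?_
    simp [hG₂, hG₀]; ring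
  have hu' : u = fun q : ℝ × ℝ => F₀ ↑q.1 * G₀ ↑q.2 := funext fun p => hu p
  have hX1 : dXc u = fun q : ℝ × ℝ => F₁ ↑q.1 * G₀ ↑q.2 := by
    rw [hu']; exact funext (prodD F₀ G₀ F₁ G₁ hF01 hG01).1
  have hY1 : dYc u = fun q : ℝ × ℝ => F₀ ↑q.1 * G₁ ↑q.2 := by
    rw [hu']; exact funext (prodD F₀ G₀ F₁ G₁ hF01 hG01).2
  have hXX : ∀ p : ℝ × ℝ, dXc (dXc u) p = -(b ^ 2) * u p := by
    intro p
    rw [hX1]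
    have := (prodD F₁ G₀ F₂ G₁ hF12 hG01).1 p
    rw [this, hu']
    simp [hF₂]; ring
  have hYY : ∀ p : ℝ × ℝ, dYc (dYc u) p = -((m : ℂ) ^ 2) * u p := by
    intro p
    rw [hY1]
    have := (prodD F₀ G₁ F₁ G₂ hF01 hG12).2 p
    rw [this, hu']
    simp [hG₂]; ring
  -- key scalar identity
  have hq₁ : q₀ - 1 ≠ 0 := by
    intro h; rw [h, zero_mul] at hsign; exact lt_irrefl 0 hsign
  have hratio : 0 ≤ (a₂ - 1) / (q₀ - 1) := by
    rcases lt_or_gt_of_ne hq₁ with h | h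
    · have ha : a₂ - 1 < 0 := by nlinarith
      exact le_of_lt (div_pos_of_neg_of_neg ha h)
    · have ha : 0 < a₂ - 1 := by nlinarith
      exact le_of_lt (div_pos ha h)
  have hk2 : k ^ 2 * (q₀ - 1) = (m : ℝ) ^ 2 * (a₂ - 1) := by
    rw [hk, mul_pow, Real.sq_sqrt hratio]
    field_simp
  have hk2c : (k : ℂ) ^ 2 * ((q₀ : ℂ) - 1) = (m : ℂ) ^ 2 * ((a₂ : ℂ) - 1) := by
    have := congrArg (Complex.ofReal) hk2
    push_cast at this ⊢
    exact_mod_cast this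
  refine ⟨?_, ?_, ?_⟩
  · intro p
    rw [hXX p, hYY p]
    have : -(b ^ 2) + (a₂ : ℂ) * -((m : ℂ) ^ 2) + (k : ℂ) ^ 2 * (q₀ : ℂ) = 0 := by
      rw [hb]; linear_combination hk2c
    linear_combination u p * this
  · intro p
    rw [hXX p, hYY p]
    linear_combination u p * (by rw [hb]; ring :
      -(b ^ 2) + -((m : ℂ) ^ 2) + (k : ℂ) ^ 2 = 0)
  · intro p hp
    rw [hY1]
    have hsin : Complex.sin ((m : ℂ) * (p.2 : ℂ)) = 0 := by
      rcases hp with h | h <;> rw [h]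
      · simp
      · have : ((m : ℂ) * (Real.pi : ℂ)) = ((m * Real.pi : ℝ) : ℂ) := by push_cast; ring
        rw [this, ← Complex.ofReal_sin, Real.sin_nat_mul_pi]
        simp
    simp [hG₁, hsin]
end

section
/- Let d ≥ 1, let e ∈ ℝᵈ with ‖e‖ = 1, let k, c₁, c₂ ∈ ℝ, and define v : ℝᵈ → ℝ by v(x) = c₁·cos(k·⟨x, e⟩) + c₂·sin(k·⟨x, e⟩). Let A : ℝᵈ → (ℝᵈ →L[ℝ] ℝᵈ) be any family of linear maps satisfying A(x)(e) = e for every x ∈ ℝᵈ. Then: (i) A(x)(∇v(x)) = ∇v(x) for every x ∈ ℝᵈ; (ii) consequently, the vector field F(x) := A(x)(∇v(x)) is differentiable and its divergence satisfies div F(x) + k²·v(x) = 0 for every x ∈ ℝᵈ, where div F = ∑ᵢ ∂ᵢFᵢ. In other words, v solves div(A∇v) + k²·v = 0 on all of ℝᵈ. -/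
open RealInnerProductSpace

theorem stmt_14 {d : ℕ} (hd : 1 ≤ d)
    (e : EuclideanSpace ℝ (Fin d)) (he : ‖e‖ = 1)
    (k c₁ c₂ : ℝ) (v : EuclideanSpace ℝ (Fin d) → ℝ)
    (hv : ∀ x, v x = c₁ * Real.cos (k * ⟪x, e⟫) + c₂ * Real.sin (k * ⟪x, e⟫))
    (A : EuclideanSpace ℝ (Fin d) →
      (EuclideanSpace ℝ (Fin d) →L[ℝ] EuclideanSpace ℝ (Fin d)))
    (hA : ∀ x, A x e = e) :
    (∀ x, A x (gradient v x) = gradient v x) ∧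
    Differentiable ℝ (fun x => A x (gradient v x)) ∧
    (∀ x, (∑ i, fderiv ℝ (fun z => A z (gradient v z) i) x (EuclideanSpace.single i 1)) +
      k ^ 2 * v x = 0) := by
  have hveq : v = fun z => c₁ * Real.cos (k * ⟪z, e⟫) + c₂ * Real.sin (k * ⟪z, e⟫) :=
    funext hv
  subst hveq
  set g : EuclideanSpace ℝ (Fin d) → ℝ :=
    fun x => (c₂ * Real.cos (k * ⟪x, e⟫) - c₁ * Real.sin (k * ⟪x, e⟫)) * k with hgdef
  have hL : ∀ x : EuclideanSpace ℝ (Fin d),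
      HasFDerivAt (fun z : EuclideanSpace ℝ (Fin d) => ⟪z, e⟫) (innerSL ℝ e) x := by
    intro x
    have h : (fun z : EuclideanSpace ℝ (Fin d) => ⟪z, e⟫)
        = fun z => (innerSL ℝ e) z := by
      funext z; exact real_inner_comm e z ▸ rfl
    rw [h]; exact (innerSL ℝ e).hasFDerivAt
  have grad_eq : ∀ x : EuclideanSpace ℝ (Fin d),
      gradient (fun z => c₁ * Real.cos (k * ⟪z, e⟫) + c₂ * Real.sin (k * ⟪z, e⟫)) x
        = g x • e := by
    intro x
    have h1 : HasDerivAt (fun t : ℝ => k * t) k ⟪x, e⟫ := by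
      simpa using (hasDerivAt_id (⟪x, e⟫ : ℝ)).const_mul k
    have hc := (Real.hasDerivAt_cos (k * ⟪x, e⟫)).comp _ h1
    have hs := (Real.hasDerivAt_sin (k * ⟪x, e⟫)).comp _ h1
    have hf : HasDerivAt (fun t : ℝ => c₁ * Real.cos (k * t) + c₂ * Real.sin (k * t))
        (g x) ⟪x, e⟫ :=
      ((hc.const_mul c₁).add (hs.const_mul c₂)).congr_deriv (by simp [hgdef]; ring)
    have hv' : HasFDerivAt
        (fun z : EuclideanSpace ℝ (Fin d) =>
          c₁ * Real.cos (k * ⟪z, e⟫) + c₂ * Real.sin (k * ⟪z, e⟫))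
        ((g x) • innerSL ℝ e) x := by have := hf.comp_hasFDerivAt x (hL x); exact this
    have heq : (InnerProductSpace.toDual ℝ (EuclideanSpace ℝ (Fin d))) (g x • e)
        = (g x) • innerSL ℝ e := by
      ext y; simp [real_inner_smul_left]
    exact (hasGradientAt_iff_hasFDerivAt.mpr (heq ▸ hv')).gradient
  have part1 : ∀ x : EuclideanSpace ℝ (Fin d),
      A x (gradient (fun z => c₁ * Real.cos (k * ⟪z, e⟫) + c₂ * Real.sin (k * ⟪z, e⟫)) x)
      = gradient (fun z => c₁ * Real.cos (k * ⟪z, e⟫) + c₂ * Real.sin (k * ⟪z, e⟫)) x := by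
    intro x
    rw [grad_eq x, map_smul, hA]
  have hFeq : (fun x : EuclideanSpace ℝ (Fin d) => A x
      (gradient (fun z => c₁ * Real.cos (k * ⟪z, e⟫) + c₂ * Real.sin (k * ⟪z, e⟫)) x))
      = fun x => g x • e := by
    funext x; rw [part1 x, grad_eq x]
  have hinner : Differentiable ℝ (fun x : EuclideanSpace ℝ (Fin d) => ⟪x, e⟫) :=
    fun x => (hL x).differentiableAt
  have hgdiff : Differentiable ℝ g := by
    apply Differentiable.mul _ (differentiable_const k)
    exact ((Real.differentiable_cos.comp ((differentiable_const k).mul hinner)).const_mul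
      c₂).sub ((Real.differentiable_sin.comp ((differentiable_const k).mul hinner)).const_mul c₁)
  refine ⟨part1, ?_, ?_⟩
  · rw [hFeq]; exact hgdiff.smul_const e
  · intro x
    have h1 : HasDerivAt (fun t : ℝ => k * t) k ⟪x, e⟫ := by
      simpa using (hasDerivAt_id (⟪x, e⟫ : ℝ)).const_mul k
    have hc := (Real.hasDerivAt_cos (k * ⟪x, e⟫)).comp _ h1
    have hs := (Real.hasDerivAt_sin (k * ⟪x, e⟫)).comp _ h1
    have hg' : HasDerivAt (fun t : ℝ => (c₂ * Real.cos (k * t) - c₁ * Real.sin (k * t)) * k)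
        ((-(c₂ * Real.sin (k * ⟪x, e⟫)) - c₁ * Real.cos (k * ⟪x, e⟫)) * k * k) ⟪x, e⟫ :=
      (((hc.const_mul c₂).sub (hs.const_mul c₁)).mul_const k).congr_deriv (by ring)
    have hG : HasFDerivAt g
        (((-(c₂ * Real.sin (k * ⟪x, e⟫)) - c₁ * Real.cos (k * ⟪x, e⟫)) * k * k)
          • innerSL ℝ e) x := by have := hg'.comp_hasFDerivAt x (hL x); exact this
    have hcomp : ∀ i : Fin d, (fun z : EuclideanSpace ℝ (Fin d) => A z
        (gradient (fun w => c₁ * Real.cos (k * ⟪w, e⟫) + c₂ * Real.sin (k * ⟪w, e⟫)) z) i)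
        = fun z => g z * e i := by
      intro i
      funext z
      rw [part1 z, grad_eq z]
      rfl
    have hfder : ∀ i : Fin d,
        fderiv ℝ (fun z : EuclideanSpace ℝ (Fin d) => A z
          (gradient (fun w => c₁ * Real.cos (k * ⟪w, e⟫) + c₂ * Real.sin (k * ⟪w, e⟫)) z) i)
          x (EuclideanSpace.single i 1)
        = ((-(c₂ * Real.sin (k * ⟪x, e⟫)) - c₁ * Real.cos (k * ⟪x, e⟫)) * k * k)
            * e i * e i := by
      intro i
      rw [hcomp i]
      have h2 : HasFDerivAt (fun z : EuclideanSpace ℝ (Fin d) => g z * e i)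
          ((e i) • (((-(c₂ * Real.sin (k * ⟪x, e⟫)) - c₁ * Real.cos (k * ⟪x, e⟫)) * k * k)
            • innerSL ℝ e)) x := by
        simpa [smul_smul, mul_comm] using hG.mul_const (e i)
      rw [h2.fderiv]
      have hsingle : ⟪e, (EuclideanSpace.single i 1 : EuclideanSpace ℝ (Fin d))⟫ = e i := by
        simp [EuclideanSpace.inner_single_right]
      simp only [ContinuousLinearMap.coe_smul', Pi.smul_apply, innerSL_apply_apply, hsingle,
        smul_eq_mul]
      ring
    rw [Finset.sum_congr rfl (fun i _ => hfder i)]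
    have hnorm : ∑ i, e i * e i = 1 := by
      have h := real_inner_self_eq_norm_sq e
      rw [he] at h
      have h2 : ⟪e, e⟫ = ∑ i, e i * e i := by
        rw [EuclideanSpace.inner_eq_star_dotProduct]
        simp [dotProduct]
      rw [h2] at h
      linarith [h]
    have hsum : ∑ i, ((-(c₂ * Real.sin (k * ⟪x, e⟫)) - c₁ * Real.cos (k * ⟪x, e⟫)) * k * k)
        * e i * e i
        = ((-(c₂ * Real.sin (k * ⟪x, e⟫)) - c₁ * Real.cos (k * ⟪x, e⟫)) * k * k)
        * ∑ i, e i * e i := by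
      rw [Finset.mul_sum]; exact Finset.sum_congr rfl (fun i _ => by ring)
    rw [hsum, hnorm]
    ring
end

section
/- Let d ≥ 1, let b₁ < b₂ be reals, let m be a positive natural number, set k = mπ/(b₂ − b₁), let a₀ > 0, and define v : ℝᵈ → ℝ by v(x) = cos(k·(x₁ − b₁)), where x₁ is the first coordinate of x. Let A : ℝᵈ → (ℝᵈ →L[ℝ] ℝᵈ) be any family of linear maps satisfying A(x)(e₁) = a₀·e₁ for every x, where e₁ is the first standard basis vector. Then: (i) Δv + k²·v = 0 on ℝᵈ; (ii) A(x)(∇v(x)) = a₀·∇v(x) for every x, and the vector field F(x) := A(x)(∇v(x)) satisfies div F(x) + k²·a₀·v(x) = 0 for every x ∈ ℝᵈ; (iii) ∂v/∂x₁(x) = 0 whenever x₁ = b₁ or x₁ = b₂. -/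
theorem stmt_15 {d : ℕ} (hd : 0 < d) (b₁ b₂ : ℝ) (hb : b₁ < b₂)
    (m : ℕ) (hm : 0 < m) (k : ℝ) (hk : k = (m : ℝ) * Real.pi / (b₂ - b₁))
    (a₀ : ℝ) (ha₀ : 0 < a₀)
    (v : EuclideanSpace ℝ (Fin d) → ℝ)
    (hv : ∀ x, v x = Real.cos (k * (x ⟨0, hd⟩ - b₁)))
    (A : EuclideanSpace ℝ (Fin d) →
      (EuclideanSpace ℝ (Fin d) →L[ℝ] EuclideanSpace ℝ (Fin d)))
    (hA : ∀ x, A x (EuclideanSpace.single (⟨0, hd⟩ : Fin d) 1) =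
      a₀ • EuclideanSpace.single (⟨0, hd⟩ : Fin d) 1) :
    (∀ x, lapl v x + k ^ 2 * v x = 0) ∧
    (∀ x, A x (gradient v x) = a₀ • gradient v x) ∧
    (∀ x, (∑ i, fderiv ℝ (fun z => A z (gradient v z) i) x (EuclideanSpace.single i 1)) +
      k ^ 2 * a₀ * v x = 0) ∧
    (∀ x : EuclideanSpace ℝ (Fin d), (x ⟨0, hd⟩ = b₁ ∨ x ⟨0, hd⟩ = b₂) →
      fderiv ℝ v x (EuclideanSpace.single (⟨0, hd⟩ : Fin d) 1) = 0) := by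
  set i0 : Fin d := ⟨0, hd⟩ with hi0
  set c : ℝ → ℝ := fun t => -Real.sin (k * (t - b₁)) * k with hc
  set c' : ℝ → ℝ := fun t => -(Real.cos (k * (t - b₁)) * k) * k with hc'
  -- derivative facts in one variable
  have hlin : ∀ t : ℝ, HasDerivAt (fun s : ℝ => k * (s - b₁)) k t := by
    intro t
    simpa using ((hasDerivAt_id t).sub_const b₁).const_mul k
  have hcd : ∀ t : ℝ, HasDerivAt (fun s => Real.cos (k * (s - b₁))) (c t) t := by
    intro t
    simpa [hc, Function.comp_def] using (Real.hasDerivAt_cos (k * (t - b₁))).comp t (hlin t)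
  have hcd' : ∀ t : ℝ, HasDerivAt c (c' t) t := by
    intro t
    have := ((Real.hasDerivAt_sin (k * (t - b₁))).comp t (hlin t)).neg.mul_const k
    simpa [hc, hc'] using this
  -- fderiv of v
  have hfd : ∀ x : EuclideanSpace ℝ (Fin d),
      HasFDerivAt v (c (x i0) • (EuclideanSpace.proj i0 : EuclideanSpace ℝ (Fin d) →L[ℝ] ℝ)) x := by
    intro x
    have hp : HasFDerivAt (fun y : EuclideanSpace ℝ (Fin d) => y i0)
        (EuclideanSpace.proj i0 : EuclideanSpace ℝ (Fin d) →L[ℝ] ℝ) x :=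
      (EuclideanSpace.proj i0 : EuclideanSpace ℝ (Fin d) →L[ℝ] ℝ).hasFDerivAt
    have := (hcd (x i0)).comp_hasFDerivAt x hp
    have hveq : v = (fun s => Real.cos (k * (s - b₁))) ∘ (fun y : EuclideanSpace ℝ (Fin d) => y i0) := by
      funext y; simp [hv y]
    rw [hveq]
    exact this
  have hfderiv : ∀ x : EuclideanSpace ℝ (Fin d),
      fderiv ℝ v x = c (x i0) • (EuclideanSpace.proj i0 : EuclideanSpace ℝ (Fin d) →L[ℝ] ℝ) :=
    fun x => (hfd x).fderiv
  -- gradient of v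
  have hgrad : ∀ x : EuclideanSpace ℝ (Fin d),
      gradient v x = c (x i0) • EuclideanSpace.single i0 (1 : ℝ) := by
    intro x
    have hG : HasGradientAt v (c (x i0) • EuclideanSpace.single i0 (1 : ℝ)) x := by
      rw [hasGradientAt_iff_hasFDerivAt]
      have : (InnerProductSpace.toDual ℝ (EuclideanSpace ℝ (Fin d)))
          (c (x i0) • EuclideanSpace.single i0 (1 : ℝ)) = c (x i0) • EuclideanSpace.proj i0 := by
        ext y
        simp [InnerProductSpace.toDual_apply_apply, real_inner_smul_left,
          EuclideanSpace.inner_single_left]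
      rw [this]
      exact hfd x
    exact hG.gradient
  -- second derivative terms
  have hsecond : ∀ (i : Fin d) (x : EuclideanSpace ℝ (Fin d)),
      fderiv ℝ (fun y => fderiv ℝ v y (EuclideanSpace.single i 1)) x (EuclideanSpace.single i 1)
        = if i = i0 then c' (x i0) else 0 := by
    intro i x
    have heq : (fun y : EuclideanSpace ℝ (Fin d) => fderiv ℝ v y (EuclideanSpace.single i 1))
        = fun y => c (y i0) * (if i0 = i then 1 else 0) := by
      funext y
      simp [hfderiv y, EuclideanSpace.single_apply]
    rw [heq]
    by_cases h : i = i0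
    · subst h
      simp only [eq_self_iff_true, if_true, mul_one]
      have hg : HasFDerivAt (fun y : EuclideanSpace ℝ (Fin d) => c (y i0))
          (c' (x i0) • (EuclideanSpace.proj i0 : EuclideanSpace ℝ (Fin d) →L[ℝ] ℝ)) x :=
        (hcd' (x i0)).comp_hasFDerivAt (f := fun y : EuclideanSpace ℝ (Fin d) => y i0) x
          (show HasFDerivAt (fun y : EuclideanSpace ℝ (Fin d) => y i0) (EuclideanSpace.proj i0 : EuclideanSpace ℝ (Fin d) →L[ℝ] ℝ) x from (EuclideanSpace.proj i0 : EuclideanSpace ℝ (Fin d) →L[ℝ] ℝ).hasFDerivAt)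
      rw [hg.fderiv]
      simp [EuclideanSpace.single_apply]
    · have : (i0 = i) = False := by simp [eq_comm, h]
      simp only [this, if_false, mul_zero, if_neg h]
      simp [fderiv_const]
  -- the vector field A z (gradient v z)
  have hAg : ∀ z : EuclideanSpace ℝ (Fin d),
      A z (gradient v z) = (a₀ * c (z i0)) • EuclideanSpace.single i0 (1 : ℝ) := by
    intro z
    rw [hgrad z, map_smul, hA z, smul_smul, mul_comm]
  have hdivterm : ∀ (i : Fin d) (x : EuclideanSpace ℝ (Fin d)),
      fderiv ℝ (fun z => A z (gradient v z) i) x (EuclideanSpace.single i 1)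
        = if i = i0 then a₀ * c' (x i0) else 0 := by
    intro i x
    have heq : (fun z : EuclideanSpace ℝ (Fin d) => A z (gradient v z) i)
        = fun z => (a₀ * c (z i0)) * (if i = i0 then 1 else 0) := by
      funext z
      rw [hAg z]
      simp [EuclideanSpace.single_apply]
    rw [heq]
    by_cases h : i = i0
    · subst h
      simp only [eq_self_iff_true, if_true, mul_one]
      have hg : HasFDerivAt (fun z : EuclideanSpace ℝ (Fin d) => a₀ * c (z i0))
          ((a₀ * c' (x i0)) • (EuclideanSpace.proj i0 : EuclideanSpace ℝ (Fin d) →L[ℝ] ℝ)) x := by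
        have := ((hcd' (x i0)).comp_hasFDerivAt x
          (show HasFDerivAt (fun y : EuclideanSpace ℝ (Fin d) => y i0) (EuclideanSpace.proj i0 : EuclideanSpace ℝ (Fin d) →L[ℝ] ℝ) x from (EuclideanSpace.proj i0 : EuclideanSpace ℝ (Fin d) →L[ℝ] ℝ).hasFDerivAt)).const_smul a₀
        simpa [smul_smul, smul_eq_mul, Function.comp_def, Pi.smul_def] using this
      rw [hg.fderiv]
      simp [EuclideanSpace.single_apply]
    · simp only [if_neg h, mul_zero]
      simp [fderiv_const]
  have hc'v : ∀ x : EuclideanSpace ℝ (Fin d), c' (x i0) = -(k ^ 2 * v x) := by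
    intro x
    simp [hc', hv x]
    ring
  refine ⟨?_, ?_, ?_, ?_⟩
  · intro x
    have : lapl v x = c' (x i0) := by
      unfold lapl
      rw [Finset.sum_congr rfl (fun i _ => hsecond i x)]
      simp
    rw [this, hc'v x]
    ring
  · intro x
    rw [hgrad x, map_smul, hA x, smul_smul, smul_smul, mul_comm]
  · intro x
    rw [Finset.sum_congr rfl (fun i _ => hdivterm i x)]
    simp only [Finset.sum_ite_eq', Finset.mem_univ, if_pos]
    rw [hc'v x]
    ring
  · intro x hx
    rw [hfderiv x]
    simp only [ContinuousLinearMap.smul_apply, smul_eq_mul]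
    have : c (x i0) = 0 := by
      rcases hx with h | h
      · simp [hc, h]
      · have hb' : b₂ - b₁ ≠ 0 := sub_ne_zero.2 (ne_of_gt hb)
        have hkb : k * (b₂ - b₁) = m * Real.pi := by
          rw [hk]; field_simp
        simp [hc, h, hkb, Real.sin_nat_mul_pi]
    simp [this]
end
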